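/- Let N ≥ 2 and let a, b : Fin (N−1) → ℝ with a_j ≠ 0 and b_j ≠ 0 for every j. Let H_0 = Σ_{j=1}^{N−1} (a_j X_j X_{j+1} + b_j Y_j Y_{j+1}) be the XY chain Hamiltonian of length N (the XX chain is the case a_j = b_j), and consider the three local controls H_1 = Z_1, H_2 = X_1, H_3 = X_2 acting on the first two spins. Then the dynamical Lie algebra generated by H_0, H_1, H_2, H_3 equals su(2^N), the set of all traceless skew-Hermitian 2^N × 2^N complex matrices; i.e., the system is fully controllable. -/

import Mathlib

open Matrix Complex Finset

attribute [local instance 100] LieRing.ofAssociativeRing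

/-- The Pauli X matrix. -/
noncomputable def PauliX : Matrix (Fin 2) (Fin 2) ℂ := !![0, 1; 1, 0]
/-- The Pauli Y matrix. -/
noncomputable def PauliY : Matrix (Fin 2) (Fin 2) ℂ := !![0, -Complex.I; Complex.I, 0]
/-- The Pauli Z matrix. -/
noncomputable def PauliZ : Matrix (Fin 2) (Fin 2) ℂ := !![1, 0; 0, -1]

/-- Tensor product of `N` single-qubit matrices: the entry at `(x, y)` is `∏ j, (P j) (x j) (y j)`. -/
noncomputable def kronN {N : ℕ} (P : Fin N → Matrix (Fin 2) (Fin 2) ℂ) :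
    Matrix (Fin N → Fin 2) (Fin N → Fin 2) ℂ :=
  Matrix.of fun x y => ∏ j, P j (x j) (y j)

/-- The single-qubit operator `R` acting on site `k`, identity elsewhere. -/
noncomputable def localOp {N : ℕ} (k : Fin N) (R : Matrix (Fin 2) (Fin 2) ℂ) :
    Matrix (Fin N → Fin 2) (Fin N → Fin 2) ℂ :=
  kronN (fun m => if m = k then R else 1)

/-- The two-site operator with `R` at site `j`, `R'` at site `k`, identity elsewhere. -/
noncomputable def twoOp {N : ℕ} (j k : Fin N) (R R' : Matrix (Fin 2) (Fin 2) ℂ) :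
    Matrix (Fin N → Fin 2) (Fin N → Fin 2) ℂ :=
  kronN (fun m => if m = j then R else if m = k then R' else 1)

/-- Left site of the `j`-th bond of a chain of length `N`. -/
def siteL {N : ℕ} (j : Fin (N - 1)) : Fin N := ⟨j.val, by have := j.isLt; omega⟩
/-- Right site of the `j`-th bond of a chain of length `N`. -/
def siteR {N : ℕ} (j : Fin (N - 1)) : Fin N := ⟨j.val + 1, by have := j.isLt; omega⟩

/-- The XYZ chain Hamiltonian of length `N` with couplings `a b c : Fin (N-1) → ℝ`:
`H₀ = Σ_j (a_j X_j X_{j+1} + b_j Y_j Y_{j+1} + c_j Z_j Z_{j+1})`. -/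
noncomputable def xyzChain (N : ℕ) (a b c : Fin (N - 1) → ℝ) :
    Matrix (Fin N → Fin 2) (Fin N → Fin 2) ℂ :=
  ∑ j : Fin (N - 1),
    ((a j : ℂ) • twoOp (siteL j) (siteR j) PauliX PauliX +
     (b j : ℂ) • twoOp (siteL j) (siteR j) PauliY PauliY +
     (c j : ℂ) • twoOp (siteL j) (siteR j) PauliZ PauliZ)

/-- The XX chain Hamiltonian of length `N` with couplings `γ : Fin (N-1) → ℝ`:
`H₀ = Σ_j γ_j (X_j X_{j+1} + Y_j Y_{j+1})`. -/
noncomputable def xxChain (N : ℕ) (γ : Fin (N - 1) → ℝ) :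
    Matrix (Fin N → Fin 2) (Fin N → Fin 2) ℂ :=
  ∑ j : Fin (N - 1),
    (γ j : ℂ) • (twoOp (siteL j) (siteR j) PauliX PauliX +
                 twoOp (siteL j) (siteR j) PauliY PauliY)

set_option maxHeartbeats 1000000

noncomputable def sig : Fin 4 → Matrix (Fin 2) (Fin 2) ℂ
  | 0 => 1
  | 1 => PauliX
  | 2 => PauliY
  | 3 => PauliZ

def mixF : Fin 4 → Fin 4 → Fin 4
  | 0, q => q
  | p, 0 => p
  | 1, 2 => 3
  | 2, 1 => 3
  | 2, 3 => 1
  | 3, 2 => 1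
  | 3, 1 => 2
  | 1, 3 => 2
  | _, _ => 0

noncomputable def phaseF : Fin 4 → Fin 4 → ℂ
  | 1, 2 => Complex.I
  | 2, 3 => Complex.I
  | 3, 1 => Complex.I
  | 2, 1 => -Complex.I
  | 3, 2 => -Complex.I
  | 1, 3 => -Complex.I
  | _, _ => 1

lemma one22 : (1 : Matrix (Fin 2) (Fin 2) ℂ) = !![1,0;0,1] := by
  ext i j; fin_cases i <;> fin_cases j <;> simp [Matrix.one_apply]

lemma sig_mul (p q : Fin 4) : sig p * sig q = phaseF p q • sig (mixF p q) := by
  fin_cases p <;> fin_cases q <;>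
    · ext i j
      fin_cases i <;> fin_cases j <;>
        simp [sig, mixF, phaseF, PauliX, PauliY, PauliZ, one22, Matrix.mul_apply,
          Fin.sum_univ_two, Complex.ext_iff] <;> ring

lemma sig_herm (p : Fin 4) : (sig p)ᴴ = sig p := by
  fin_cases p <;>
  · ext i j
    fin_cases i <;> fin_cases j <;>
      simp [sig, PauliX, PauliY, PauliZ, one22, conjTranspose_apply, Complex.ext_iff]

lemma sig_trace (p : Fin 4) : (sig p).trace = if p = 0 then 2 else 0 := by
  fin_cases p <;>
    simp [sig, PauliX, PauliY, PauliZ, one22, Matrix.trace, Matrix.diag, Fin.sum_univ_two] <;>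
    norm_num

lemma phase_symm (p q : Fin 4) : phaseF q p = star (phaseF p q) := by
  fin_cases p <;> fin_cases q <;> simp [phaseF]

lemma mix_symm : ∀ p q : Fin 4, mixF p q = mixF q p := by decide
lemma mix_zero : ∀ p : Fin 4, mixF p 0 = p := by decide
lemma zero_mix : ∀ p : Fin 4, mixF 0 p = p := by decide
lemma mix_self : ∀ p : Fin 4, mixF p p = 0 := by decide
lemma phase_zero (p : Fin 4) : phaseF p 0 = 1 := by fin_cases p <;> rfl
lemma zero_phase (p : Fin 4) : phaseF 0 p = 1 := by fin_cases p <;> rfl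
lemma phase_self (p : Fin 4) : phaseF p p = 1 := by fin_cases p <;> rfl

lemma kronN_mul {N : ℕ} (P Q : Fin N → Matrix (Fin 2) (Fin 2) ℂ) :
    kronN P * kronN Q = kronN (fun j => P j * Q j) := by
  ext x y
  simp only [kronN, Matrix.mul_apply, Matrix.of_apply]
  rw [Finset.prod_univ_sum, Fintype.piFinset_univ]
  exact Finset.sum_congr rfl fun z _ => (Finset.prod_mul_distrib).symm

lemma kronN_smul {N : ℕ} (c : Fin N → ℂ) (P : Fin N → Matrix (Fin 2) (Fin 2) ℂ) :
    kronN (fun j => c j • P j) = (∏ j, c j) • kronN P := by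
  ext x y
  simp only [kronN, Matrix.of_apply, Matrix.smul_apply, smul_eq_mul]
  rw [← Finset.prod_mul_distrib]

lemma kronN_conjTranspose {N : ℕ} (P : Fin N → Matrix (Fin 2) (Fin 2) ℂ) :
    (kronN P)ᴴ = kronN (fun j => (P j)ᴴ) := by
  ext x y
  simp only [kronN, Matrix.conjTranspose_apply, Matrix.of_apply, star_prod]

lemma kronN_trace {N : ℕ} (P : Fin N → Matrix (Fin 2) (Fin 2) ℂ) :
    (kronN P).trace = ∏ j, (P j).trace := by
  simp only [Matrix.trace, Matrix.diag, kronN, Matrix.of_apply]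
  rw [Finset.prod_univ_sum, Fintype.piFinset_univ]

noncomputable def Pstr {N : ℕ} (s : Fin N → Fin 4) :
    Matrix (Fin N → Fin 2) (Fin N → Fin 2) ℂ := kronN (fun j => sig (s j))

noncomputable def Phi {N : ℕ} (s t : Fin N → Fin 4) : ℂ := ∏ j, phaseF (s j) (t j)

def mixS {N : ℕ} (s t : Fin N → Fin 4) : Fin N → Fin 4 := fun j => mixF (s j) (t j)

lemma Pstr_mul {N : ℕ} (s t : Fin N → Fin 4) :
    Pstr s * Pstr t = Phi s t • Pstr (mixS s t) := by
  rw [Pstr, Pstr, kronN_mul]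
  have : (fun j => sig (s j) * sig (t j)) =
      fun j => phaseF (s j) (t j) • sig (mixS s t j) := by
    funext j; rw [sig_mul]; rfl
  rw [this, kronN_smul]; rfl

lemma Phi_swap {N : ℕ} (s t : Fin N → Fin 4) : Phi t s = star (Phi s t) := by
  rw [Phi, Phi]
  refine (Finset.prod_congr rfl fun j _ => phase_symm _ _).trans ?_
  exact (map_prod (starRingEnd ℂ) (fun j => phaseF (s j) (t j)) Finset.univ).symm

lemma mixS_symm {N : ℕ} (s t : Fin N → Fin 4) : mixS t s = mixS s t := by
  funext j; exact mix_symm _ _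

lemma lie_Pstr {N : ℕ} (s t : Fin N → Fin 4) :
    ⁅Pstr s, Pstr t⁆ = (Phi s t - star (Phi s t)) • Pstr (mixS s t) := by
  rw [Ring.lie_def, Pstr_mul s t, Pstr_mul t s, mixS_symm t s, Phi_swap s t, sub_smul]

lemma real_smul_helper {N : ℕ} (r : ℝ) (c : ℂ) (X : Matrix (Fin N → Fin 2) (Fin N → Fin 2) ℂ) :
    r • (c • X) = ((r : ℂ) * c) • X := by
  rw [← smul_assoc]; congr 1

section Mem
variable {N : ℕ} (S : LieSubalgebra ℝ (Matrix (Fin N → Fin 2) (Fin N → Fin 2) ℂ))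

lemma bracket_mem {s t : Fin N → Fin 4}
    (hs : Complex.I • Pstr s ∈ S) (ht : Complex.I • Pstr t ∈ S)
    (hφ : Phi s t = Complex.I ∨ Phi s t = -Complex.I) :
    Complex.I • Pstr (mixS s t) ∈ S := by
  have h := S.lie_mem hs ht
  rw [lie_smul, smul_lie, lie_Pstr, smul_smul, smul_smul] at h
  rcases hφ with hφ | hφ <;> rw [hφ] at h
  · have e : (Complex.I * Complex.I * (Complex.I - star Complex.I)) = -2 * Complex.I := by
      simp [Complex.conj_I]; ring
    rw [e] at h
    have h2 := S.smul_mem (-(1/2 : ℝ)) h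
    rwa [real_smul_helper, show ((-(1/2:ℝ) : ℝ) : ℂ) * (-2 * Complex.I) = Complex.I by
      push_cast; ring] at h2
  · have e : (Complex.I * Complex.I * (-Complex.I - star (-Complex.I))) = 2 * Complex.I := by
      simp [Complex.conj_I]; ring
    rw [e] at h
    have h2 := S.smul_mem ((1/2 : ℝ)) h
    rwa [real_smul_helper, show (((1/2:ℝ) : ℝ) : ℂ) * (2 * Complex.I) = Complex.I by
      push_cast; ring] at h2

end Mem

def sgl {N : ℕ} (k : Fin N) (p : Fin 4) : Fin N → Fin 4 := fun m => if m = k then p else 0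
def dbl {N : ℕ} (j k : Fin N) (p q : Fin 4) : Fin N → Fin 4 :=
  fun m => if m = j then p else if m = k then q else 0

lemma Phi_sgl_right {N : ℕ} (s : Fin N → Fin 4) (k : Fin N) (p : Fin 4) :
    Phi s (sgl k p) = phaseF (s k) p := by
  rw [Phi]
  rw [Finset.prod_eq_single k (fun m _ hm => by simp [sgl, hm, phase_zero])
    (fun h => absurd (Finset.mem_univ k) h)]
  simp [sgl]

lemma mixS_sgl_right {N : ℕ} (s : Fin N → Fin 4) (k : Fin N) (p : Fin 4) :
    mixS s (sgl k p) = Function.update s k (mixF (s k) p) := by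
  funext m
  by_cases hm : m = k <;> simp [mixS, sgl, hm, Function.update, mix_zero]

lemma Phi_dbl_right {N : ℕ} (s : Fin N → Fin 4) {j k : Fin N} (hjk : j ≠ k) (p q : Fin 4) :
    Phi s (dbl j k p q) = phaseF (s j) p * phaseF (s k) q := by
  rw [Phi]
  rw [← Finset.prod_subset (Finset.subset_univ ({j, k} : Finset (Fin N)))
    (fun m _ hm => by
      simp only [Finset.mem_insert, Finset.mem_singleton, not_or] at hm
      simp [dbl, hm.1, hm.2, phase_zero])]
  rw [Finset.prod_insert (by simp [hjk]), Finset.prod_singleton]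
  simp [dbl, hjk, hjk.symm]

lemma mixS_dbl_right {N : ℕ} (s : Fin N → Fin 4) {j k : Fin N} (hjk : j ≠ k) (p q : Fin 4) :
    mixS s (dbl j k p q) =
      Function.update (Function.update s j (mixF (s j) p)) k (mixF (s k) q) := by
  funext m
  rcases eq_or_ne m j with hm | hm
  · subst hm; simp [mixS, dbl, hjk, Function.update, mix_zero]
  · rcases eq_or_ne m k with hm2 | hm2
    · subst hm2; simp [mixS, dbl, hjk.symm, Function.update, mix_zero]
    · simp [mixS, dbl, hm, hm2, Function.update, mix_zero]

section Mem2
variable {N : ℕ} {S : LieSubalgebra ℝ (Matrix (Fin N → Fin 2) (Fin N → Fin 2) ℂ)}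

lemma mem_bracket_sgl {s : Fin N → Fin 4} {k : Fin N} {p : Fin 4}
    (hs : Complex.I • Pstr s ∈ S) (ht : Complex.I • Pstr (sgl k p) ∈ S)
    (hφ : phaseF (s k) p = Complex.I ∨ phaseF (s k) p = -Complex.I) :
    Complex.I • Pstr (Function.update s k (mixF (s k) p)) ∈ S := by
  have h := bracket_mem S hs ht (by rwa [Phi_sgl_right])
  rwa [mixS_sgl_right] at h

lemma mem_bracket_dbl {s : Fin N → Fin 4} {j k : Fin N} (hjk : j ≠ k) {p q : Fin 4}
    (hs : Complex.I • Pstr s ∈ S) (ht : Complex.I • Pstr (dbl j k p q) ∈ S)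
    (hφ : phaseF (s j) p * phaseF (s k) q = Complex.I ∨
          phaseF (s j) p * phaseF (s k) q = -Complex.I) :
    Complex.I • Pstr
      (Function.update (Function.update s j (mixF (s j) p)) k (mixF (s k) q)) ∈ S := by
  have h := bracket_mem S hs ht (by rwa [Phi_dbl_right s hjk])
  rwa [mixS_dbl_right s hjk] at h

end Mem2

-- string utilities
section Strings
variable {N : ℕ}

lemma sgl_apply_self (k : Fin N) (p : Fin 4) : sgl k p k = p := by simp [sgl]
lemma sgl_apply_ne {k m : Fin N} (h : m ≠ k) (p : Fin 4) : sgl k p m = 0 := by simp [sgl, h]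
lemma dbl_apply_left {j k : Fin N} (p q : Fin 4) : dbl j k p q j = p := by simp [dbl]
lemma dbl_apply_right {j k : Fin N} (h : j ≠ k) (p q : Fin 4) : dbl j k p q k = q := by
  simp [dbl, h.symm]
lemma dbl_apply_ne {j k m : Fin N} (h1 : m ≠ j) (h2 : m ≠ k) (p q : Fin 4) :
    dbl j k p q m = 0 := by simp [dbl, h1, h2]

/-- update both slots of a double -/
lemma upd_dbl {j k : Fin N} (h : j ≠ k) (p q p' q' : Fin 4) :
    Function.update (Function.update (dbl j k p q) j p') k q' = dbl j k p' q' := by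
  funext m
  rcases eq_or_ne m j with rfl | h1
  · simp [Function.update, h, dbl]
  · rcases eq_or_ne m k with rfl | h2
    · simp [Function.update, dbl, h1]
    · simp [Function.update, h1, h2, dbl]

lemma dbl_zero_right {j k : Fin N} (h : j ≠ k) (p : Fin 4) : dbl j k p 0 = sgl j p := by
  funext m
  rcases eq_or_ne m j with rfl | h1
  · simp [dbl, sgl]
  · rcases eq_or_ne m k with rfl | h2
    · simp [dbl, sgl, h1]
    · simp [dbl, sgl, h1, h2]

lemma dbl_zero_left {j k : Fin N} (h : j ≠ k) (q : Fin 4) : dbl j k 0 q = sgl k q := by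
  funext m
  rcases eq_or_ne m j with rfl | h1
  · simp [dbl, sgl, h]
  · rcases eq_or_ne m k with rfl | h2
    · simp [dbl, sgl, h1]
    · simp [dbl, sgl, h1, h2]

/-- update slot j of a double at (j,k) -/
lemma upd_dbl_left {j k : Fin N} (h : j ≠ k) (p q p' : Fin 4) :
    Function.update (dbl j k p q) j p' = dbl j k p' q := by
  funext m
  rcases eq_or_ne m j with rfl | h1
  · simp [Function.update, dbl]
  · simp [Function.update, h1, dbl]

lemma upd_dbl_right {j k : Fin N} (h : j ≠ k) (p q q' : Fin 4) :
    Function.update (dbl j k p q) k q' = dbl j k p q' := by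
  funext m
  rcases eq_or_ne m k with rfl | h1
  · simp [Function.update, dbl, h.symm]
  · simp [Function.update, h1, dbl]

lemma upd_upd_sgl {w u : Fin N} (h : w ≠ u) (p q r : Fin 4) :
    Function.update (Function.update (sgl u p) w q) u r = dbl w u q r := by
  funext m
  rcases eq_or_ne m w with rfl | h1
  · simp [Function.update, h, dbl, sgl]
  · rcases eq_or_ne m u with rfl | h2
    · simp [Function.update, h.symm, dbl, sgl]
    · simp [Function.update, h1, h2, dbl, sgl, h2]

lemma upd_sgl_self {u : Fin N} (p r : Fin 4) :
    Function.update (sgl u p) u r = sgl u r := by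
  funext m
  rcases eq_or_ne m u with rfl | h1
  · simp [Function.update, sgl]
  · simp [Function.update, sgl, h1]

end Strings

section Triples
variable {N : ℕ} {w u v : Fin N}

def trp (w u v : Fin N) (p q r : Fin 4) : Fin N → Fin 4 :=
  fun m => if m = w then p else if m = u then q else if m = v then r else 0

lemma trp_apply_w (p q r : Fin 4) : trp w u v p q r w = p := by simp [trp]
lemma trp_apply_u (hwu : w ≠ u) (p q r : Fin 4) : trp w u v p q r u = q := by
  simp [trp, hwu.symm]
lemma trp_apply_v (huv : u ≠ v) (hwv : w ≠ v) (p q r : Fin 4) : trp w u v p q r v = r := by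
  simp [trp, hwv.symm, huv.symm]

lemma upd_dbl_to_trp (huv : u ≠ v) (hwv : w ≠ v) (p q r : Fin 4) :
    Function.update (dbl w u p q) v r = trp w u v p q r := by
  funext m
  rcases eq_or_ne m v with rfl | h1
  · simp [Function.update, trp, hwv.symm, huv.symm]
  · rcases eq_or_ne m w with rfl | h2
    · simp [Function.update, h1, trp, dbl]
    · rcases eq_or_ne m u with rfl | h3
      · simp [Function.update, h1, h2, trp, dbl]
      · simp [Function.update, h1, h2, h3, trp, dbl]

lemma upd_dbl_mid (hwu : w ≠ u) (huv : u ≠ v) (p q r : Fin 4) :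
    Function.update (dbl w v p r) u q = trp w u v p q r := by
  funext m
  rcases eq_or_ne m u with rfl | h1
  · simp [Function.update, trp, hwu.symm]
  · rcases eq_or_ne m w with rfl | h2
    · simp [Function.update, h1, trp, dbl]
    · rcases eq_or_ne m v with rfl | h3
      · simp [Function.update, h1, h2, trp, dbl]
      · simp [Function.update, h1, h2, h3, trp, dbl]

lemma upd_trp_u (hwu : w ≠ u) (p q r q' : Fin 4) :
    Function.update (trp w u v p q r) u q' = trp w u v p q' r := by
  funext m
  rcases eq_or_ne m u with rfl | h1
  · simp [Function.update, trp, hwu.symm]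
  · simp [Function.update, h1, trp]

lemma upd_trp_w (p q r p' : Fin 4) :
    Function.update (trp w u v p q r) w p' = trp w u v p' q r := by
  funext m
  rcases eq_or_ne m w with rfl | h1
  · simp [Function.update, trp]
  · simp [Function.update, h1, trp]

lemma upd_trp_v (huv : u ≠ v) (hwv : w ≠ v) (p q r r' : Fin 4) :
    Function.update (trp w u v p q r) v r' = trp w u v p q r' := by
  funext m
  rcases eq_or_ne m v with rfl | h1
  · simp [Function.update, trp, hwv.symm, huv.symm]
  · simp [Function.update, h1, trp]

lemma trp_zero_mid (hwu : w ≠ u) (huv : u ≠ v) (p r : Fin 4) :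
    trp w u v p 0 r = dbl w v p r := by
  funext m
  rcases eq_or_ne m w with rfl | h1
  · simp [trp, dbl]
  · rcases eq_or_ne m u with rfl | h2
    · simp [trp, dbl, h1, huv]
    · rcases eq_or_ne m v with rfl | h3
      · simp [trp, dbl, h1, h2]
      · simp [trp, dbl, h1, h2, h3]

lemma trp_zero_w (hwu : w ≠ u) (hwv : w ≠ v) (q r : Fin 4) :
    trp w u v 0 q r = dbl u v q r := by
  funext m
  rcases eq_or_ne m w with rfl | h1
  · simp [trp, dbl, hwu, hwv]
  · rcases eq_or_ne m u with rfl | h2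
    · simp [trp, dbl, h1]
    · rcases eq_or_ne m v with rfl | h3
      · simp [trp, dbl, h1, h2]
      · simp [trp, dbl, h1, h2, h3]

end Triples

section BondStep
variable {N : ℕ} {S : LieSubalgebra ℝ (Matrix (Fin N → Fin 2) (Fin N → Fin 2) ℂ)}

/-- From full control at bond (w,u) plus the two seeds Z_u X_v, Z_u Y_v,
derive full control at bond (u,v). -/
lemma bondStep {w u v : Fin N} (hwu : w ≠ u) (huv : u ≠ v) (hwv : w ≠ v)
    (hu : ∀ p : Fin 4, p ≠ 0 → Complex.I • Pstr (sgl u p) ∈ S)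
    (hwud : ∀ p q : Fin 4, p ≠ 0 → q ≠ 0 → Complex.I • Pstr (dbl w u p q) ∈ S)
    (d31 : Complex.I • Pstr (dbl u v 3 1) ∈ S)
    (d32 : Complex.I • Pstr (dbl u v 3 2) ∈ S) :
    (∀ p : Fin 4, p ≠ 0 → Complex.I • Pstr (sgl v p) ∈ S) ∧
    (∀ p q : Fin 4, p ≠ 0 → q ≠ 0 → Complex.I • Pstr (dbl u v p q) ∈ S) := by
  -- Z_v
  have hZv : Complex.I • Pstr (sgl v 3) ∈ S := by
    have h := mem_bracket_dbl huv d31 d32 (by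
      rw [dbl_apply_left, dbl_apply_right huv,
        show phaseF 3 3 = 1 from rfl, show phaseF 1 2 = Complex.I from rfl, one_mul]
      left; rfl)
    rwa [dbl_apply_left, dbl_apply_right huv, upd_dbl huv,
      show mixF 3 3 = 0 from rfl, show mixF 1 2 = 3 from rfl, dbl_zero_left huv] at h
  -- Y_u X_v
  have d21 : Complex.I • Pstr (dbl u v 2 1) ∈ S := by
    have h := mem_bracket_sgl d31 (hu 1 (by decide)) (by
      rw [dbl_apply_left]; left; rfl)
    rwa [dbl_apply_left, show mixF 3 1 = 2 from rfl, upd_dbl_left huv] at h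
  -- X_u X_v
  have d11 : Complex.I • Pstr (dbl u v 1 1) ∈ S := by
    have h := mem_bracket_sgl d31 (hu 2 (by decide)) (by
      rw [dbl_apply_left]; right; rfl)
    rwa [dbl_apply_left, show mixF 3 2 = 1 from rfl, upd_dbl_left huv] at h
  -- Y_u Y_v
  have d22 : Complex.I • Pstr (dbl u v 2 2) ∈ S := by
    have h := mem_bracket_sgl d32 (hu 1 (by decide)) (by
      rw [dbl_apply_left]; left; rfl)
    rwa [dbl_apply_left, show mixF 3 1 = 2 from rfl, upd_dbl_left huv] at h
  -- X_u Y_v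
  have d12 : Complex.I • Pstr (dbl u v 1 2) ∈ S := by
    have h := mem_bracket_sgl d32 (hu 2 (by decide)) (by
      rw [dbl_apply_left]; right; rfl)
    rwa [dbl_apply_left, show mixF 3 2 = 1 from rfl, upd_dbl_left huv] at h
  -- T1 = X_w Y_u X_v
  have hT1 : Complex.I • Pstr (trp w u v 1 2 1) ∈ S := by
    have h := mem_bracket_dbl huv (hwud 1 1 (by decide) (by decide)) d31 (by
      rw [dbl_apply_right hwu, dbl_apply_ne hwv.symm huv.symm,
        show phaseF 1 3 = -Complex.I from rfl, show phaseF 0 1 = 1 from rfl, mul_one]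
      right; rfl)
    rwa [dbl_apply_right hwu, dbl_apply_ne hwv.symm huv.symm,
      show mixF 1 3 = 2 from rfl, show mixF 0 1 = 1 from rfl,
      upd_dbl_right hwu, upd_dbl_to_trp huv hwv] at h
  -- X_w Z_v
  have hXZ : Complex.I • Pstr (dbl w v 1 3) ∈ S := by
    have h := mem_bracket_dbl huv hT1 d22 (by
      rw [trp_apply_u hwu, trp_apply_v huv hwv,
        show phaseF 2 2 = 1 from rfl, show phaseF 1 2 = Complex.I from rfl, one_mul]
      left; rfl)
    rwa [trp_apply_u hwu, trp_apply_v huv hwv,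
      show mixF 2 2 = 0 from rfl, show mixF 1 2 = 3 from rfl,
      upd_trp_u hwu, upd_trp_v huv hwv, trp_zero_mid hwu huv] at h
  -- T2 = Z_w X_u Z_v
  have hT2 : Complex.I • Pstr (trp w u v 3 1 3) ∈ S := by
    have h := mem_bracket_dbl hwu hXZ (hwud 2 1 (by decide) (by decide)) (by
      rw [dbl_apply_left, dbl_apply_ne hwu.symm huv,
        show phaseF 1 2 = Complex.I from rfl, show phaseF 0 1 = 1 from rfl, mul_one]
      left; rfl)
    rwa [dbl_apply_left, dbl_apply_ne hwu.symm huv,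
      show mixF 1 2 = 3 from rfl, show mixF 0 1 = 1 from rfl,
      upd_dbl_left hwv, upd_dbl_mid hwu huv] at h
  -- Z_u Z_v
  have d33 : Complex.I • Pstr (dbl u v 3 3) ∈ S := by
    have h := mem_bracket_dbl hwu hT2 (hwud 3 2 (by decide) (by decide)) (by
      rw [trp_apply_w, trp_apply_u hwu,
        show phaseF 3 3 = 1 from rfl, show phaseF 1 2 = Complex.I from rfl, one_mul]
      left; rfl)
    rwa [trp_apply_w, trp_apply_u hwu,
      show mixF 3 3 = 0 from rfl, show mixF 1 2 = 3 from rfl,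
      upd_trp_w, upd_trp_u hwu, trp_zero_w hwu hwv] at h
  -- Y_v
  have hYv : Complex.I • Pstr (sgl v 2) ∈ S := by
    have h := mem_bracket_dbl huv d31 d33 (by
      rw [dbl_apply_left, dbl_apply_right huv,
        show phaseF 3 3 = 1 from rfl, show phaseF 1 3 = -Complex.I from rfl, one_mul]
      right; rfl)
    rwa [dbl_apply_left, dbl_apply_right huv, upd_dbl huv,
      show mixF 3 3 = 0 from rfl, show mixF 1 3 = 2 from rfl, dbl_zero_left huv] at h
  -- X_v
  have hXv : Complex.I • Pstr (sgl v 1) ∈ S := by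
    have h := mem_bracket_dbl huv d32 d33 (by
      rw [dbl_apply_left, dbl_apply_right huv,
        show phaseF 3 3 = 1 from rfl, show phaseF 2 3 = Complex.I from rfl, one_mul]
      left; rfl)
    rwa [dbl_apply_left, dbl_apply_right huv, upd_dbl huv,
      show mixF 3 3 = 0 from rfl, show mixF 2 3 = 1 from rfl, dbl_zero_left huv] at h
  -- X_u Z_v
  have d13 : Complex.I • Pstr (dbl u v 1 3) ∈ S := by
    have h := mem_bracket_sgl d11 hYv (by
      rw [dbl_apply_right huv]; left; rfl)
    rwa [dbl_apply_right huv, show mixF 1 2 = 3 from rfl, upd_dbl_right huv] at h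
  -- Y_u Z_v
  have d23 : Complex.I • Pstr (dbl u v 2 3) ∈ S := by
    have h := mem_bracket_sgl d21 hYv (by
      rw [dbl_apply_right huv]; left; rfl)
    rwa [dbl_apply_right huv, show mixF 1 2 = 3 from rfl, upd_dbl_right huv] at h
  refine ⟨?_, ?_⟩
  · intro p hp
    fin_cases p
    · exact absurd rfl hp
    · exact hXv
    · exact hYv
    · exact hZv
  · intro p q hp hq
    fin_cases p <;> fin_cases q
    any_goals exact absurd rfl hp
    any_goals exact absurd rfl hq
    exacts [d11, d12, d13, d21, d22, d23, d31, d32, d33]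
end BondStep

noncomputable def PH0 {N : ℕ} (a b : Fin (N - 1) → ℝ) :
    Matrix (Fin N → Fin 2) (Fin N → Fin 2) ℂ :=
  ∑ j : Fin (N - 1),
    ((a j : ℂ) • Pstr (dbl (siteL j) (siteR j) 1 1) +
     (b j : ℂ) • Pstr (dbl (siteL j) (siteR j) 2 2))

lemma lie_Pstr_real {N : ℕ} {s t : Fin N → Fin 4} (h : star (Phi s t) = Phi s t) :
    ⁅Pstr s, Pstr t⁆ = 0 := by
  rw [lie_Pstr, h, sub_self, zero_smul]

lemma upd_sgl_other {N : ℕ} {u v : Fin N} (h : u ≠ v) (p q : Fin 4) :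
    Function.update (sgl u p) v q = dbl u v p q := by
  funext m
  rcases eq_or_ne m v with rfl | h1
  · simp [Function.update, sgl, dbl, h.symm]
  · rcases eq_or_ne m u with rfl | h2
    · simp [Function.update, h1, sgl, dbl]
    · simp [Function.update, h1, h2, sgl, dbl]

lemma siteL_ne_siteR {N : ℕ} (j : Fin (N - 1)) : siteL j ≠ siteR j := by
  simp [siteL, siteR, Fin.ext_iff]

/-- X_u commutes with every XX bond term. -/
lemma lie_sglX_XX {N : ℕ} (u : Fin N) (j : Fin (N - 1)) :
    ⁅Pstr (sgl u 1), Pstr (dbl (siteL j) (siteR j) 1 1)⁆ = 0 := by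
  apply lie_Pstr_real
  rw [Phi_dbl_right _ (siteL_ne_siteR j)]
  rcases eq_or_ne (siteL j) u with h1 | h1
  · rw [h1, sgl_apply_self]
    rcases eq_or_ne (siteR j) u with h2 | h2
    · rw [h2, sgl_apply_self]; norm_num [show phaseF 1 1 = 1 from rfl]
    · rw [sgl_apply_ne h2]; norm_num [show phaseF 1 1 = 1 from rfl, show phaseF 0 1 = 1 from rfl]
  · rw [sgl_apply_ne h1]
    rcases eq_or_ne (siteR j) u with h2 | h2
    · rw [h2, sgl_apply_self]; norm_num [show phaseF 1 1 = 1 from rfl, show phaseF 0 1 = 1 from rfl]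
    · rw [sgl_apply_ne h2]; norm_num [show phaseF 0 1 = 1 from rfl]

lemma lie_sglY_YY {N : ℕ} (u : Fin N) (j : Fin (N - 1)) :
    ⁅Pstr (sgl u 2), Pstr (dbl (siteL j) (siteR j) 2 2)⁆ = 0 := by
  apply lie_Pstr_real
  rw [Phi_dbl_right _ (siteL_ne_siteR j)]
  rcases eq_or_ne (siteL j) u with h1 | h1
  · rw [h1, sgl_apply_self]
    rcases eq_or_ne (siteR j) u with h2 | h2
    · rw [h2, sgl_apply_self]; norm_num [show phaseF 2 2 = 1 from rfl]
    · rw [sgl_apply_ne h2]; norm_num [show phaseF 2 2 = 1 from rfl, show phaseF 0 2 = 1 from rfl]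
  · rw [sgl_apply_ne h1]
    rcases eq_or_ne (siteR j) u with h2 | h2
    · rw [h2, sgl_apply_self]; norm_num [show phaseF 2 2 = 1 from rfl, show phaseF 0 2 = 1 from rfl]
    · rw [sgl_apply_ne h2]; norm_num [show phaseF 0 2 = 1 from rfl]

/-- sgl commutes with a far-away bond term. -/
lemma lie_sgl_far {N : ℕ} (u : Fin N) (p q : Fin 4) (j : Fin (N - 1))
    (h1 : siteL j ≠ u) (h2 : siteR j ≠ u) :
    ⁅Pstr (sgl u p), Pstr (dbl (siteL j) (siteR j) q q)⁆ = 0 := by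
  apply lie_Pstr_real
  rw [Phi_dbl_right _ (siteL_ne_siteR j), sgl_apply_ne h1, sgl_apply_ne h2,
    zero_phase, one_mul, star_one]

lemma I_sub_star : Complex.I - star Complex.I = 2 * Complex.I := by
  simp [Complex.conj_I]; ring

lemma negI_sub_star : -Complex.I - star (-Complex.I) = -(2 * Complex.I) := by
  simp [Complex.conj_I]; ring

lemma lie_sum' {L : Type*} [LieRing L] (x : L) {ι : Type*} (s : Finset ι) (f : ι → L) :
    ⁅x, ∑ i ∈ s, f i⁆ = ∑ i ∈ s, ⁅x, f i⁆ := by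
  induction s using Finset.cons_induction with
  | empty => simp
  | cons a s ha ih => simp [Finset.sum_cons, lie_add, ih]

lemma H0_lie_X {N : ℕ} (a b : Fin (N - 1) → ℝ) (k : ℕ) (hk : k + 1 < N - 1) :
    ⁅Pstr (sgl (⟨k+1, by omega⟩ : Fin N) 1), PH0 a b⁆
      = (b ⟨k, by omega⟩ : ℂ) •
          ((2*Complex.I) • Pstr (dbl (⟨k, by omega⟩ : Fin N) ⟨k+1, by omega⟩ 2 3))
      + (b ⟨k+1, by omega⟩ : ℂ) •
          ((2*Complex.I) • Pstr (dbl (⟨k+1, by omega⟩ : Fin N) ⟨k+2, by omega⟩ 3 2)) := by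
  set u : Fin N := ⟨k+1, by omega⟩ with hu
  set bk : Fin (N-1) := ⟨k, by omega⟩ with hbk
  set bk1 : Fin (N-1) := ⟨k+1, by omega⟩ with hbk1
  rw [PH0, lie_sum']
  simp only [lie_add, lie_smul]
  rw [← Finset.sum_subset (Finset.subset_univ ({bk, bk1} : Finset (Fin (N-1))))
    (fun j _ hj => by
      simp only [Finset.mem_insert, Finset.mem_singleton, not_or, hbk, hbk1, Fin.ext_iff] at hj
      rw [lie_sglX_XX, lie_sgl_far u 1 2 j
        (by simp only [siteL, hu, ne_eq, Fin.mk.injEq]; exact hj.2)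
        (by simp only [siteR, hu, ne_eq, Fin.mk.injEq]; omega)]
      simp)]
  rw [Finset.sum_insert (by simp [hbk, hbk1, Fin.ext_iff]), Finset.sum_singleton]
  have hLbk : siteL bk ≠ u := by simp [siteL, hu, hbk, Fin.ext_iff]
  have hRbk : siteR bk = u := by simp [siteR, hu, hbk, Fin.ext_iff]
  have hLbk1 : siteL bk1 = u := by simp [siteL, hu, hbk1, Fin.ext_iff]
  have hRbk1 : siteR bk1 ≠ u := by simp [siteR, hu, hbk1, Fin.ext_iff]
  rw [lie_sglX_XX, lie_sglX_XX, smul_zero, smul_zero, zero_add, zero_add]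
  rw [lie_Pstr, lie_Pstr]
  rw [Phi_dbl_right _ (siteL_ne_siteR bk), Phi_dbl_right _ (siteL_ne_siteR bk1)]
  rw [mixS_dbl_right _ (siteL_ne_siteR bk), mixS_dbl_right _ (siteL_ne_siteR bk1)]
  rw [sgl_apply_ne hLbk, hRbk, sgl_apply_self, hLbk1, sgl_apply_self, sgl_apply_ne hRbk1]
  rw [show phaseF 0 2 = 1 from rfl, show phaseF 1 2 = Complex.I from rfl, one_mul, mul_one,
    I_sub_star]
  rw [show mixF 0 2 = 2 from rfl, show mixF 1 2 = 3 from rfl]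
  rw [upd_upd_sgl hLbk, upd_sgl_self, upd_sgl_other (fun h => hRbk1 h.symm)]
  exact rfl

lemma H0_lie_Y {N : ℕ} (a b : Fin (N - 1) → ℝ) (k : ℕ) (hk : k + 1 < N - 1) :
    ⁅Pstr (sgl (⟨k+1, by omega⟩ : Fin N) 2), PH0 a b⁆
      = (a ⟨k, by omega⟩ : ℂ) •
          ((-(2*Complex.I)) • Pstr (dbl (⟨k, by omega⟩ : Fin N) ⟨k+1, by omega⟩ 1 3))
      + (a ⟨k+1, by omega⟩ : ℂ) •
          ((-(2*Complex.I)) • Pstr (dbl (⟨k+1, by omega⟩ : Fin N) ⟨k+2, by omega⟩ 3 1)) := by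
  set u : Fin N := ⟨k+1, by omega⟩ with hu
  set bk : Fin (N-1) := ⟨k, by omega⟩ with hbk
  set bk1 : Fin (N-1) := ⟨k+1, by omega⟩ with hbk1
  rw [PH0, lie_sum']
  simp only [lie_add, lie_smul]
  rw [← Finset.sum_subset (Finset.subset_univ ({bk, bk1} : Finset (Fin (N-1))))
    (fun j _ hj => by
      simp only [Finset.mem_insert, Finset.mem_singleton, not_or, hbk, hbk1, Fin.ext_iff] at hj
      rw [lie_sglY_YY, lie_sgl_far u 2 1 j
        (by simp only [siteL, hu, ne_eq, Fin.mk.injEq]; exact hj.2)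
        (by simp only [siteR, hu, ne_eq, Fin.mk.injEq]; omega)]
      simp)]
  rw [Finset.sum_insert (by simp [hbk, hbk1, Fin.ext_iff]), Finset.sum_singleton]
  have hLbk : siteL bk ≠ u := by simp [siteL, hu, hbk, Fin.ext_iff]
  have hRbk : siteR bk = u := by simp [siteR, hu, hbk, Fin.ext_iff]
  have hLbk1 : siteL bk1 = u := by simp [siteL, hu, hbk1, Fin.ext_iff]
  have hRbk1 : siteR bk1 ≠ u := by simp [siteR, hu, hbk1, Fin.ext_iff]
  rw [lie_sglY_YY, lie_sglY_YY, smul_zero, smul_zero, add_zero, add_zero]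
  rw [lie_Pstr, lie_Pstr]
  rw [Phi_dbl_right _ (siteL_ne_siteR bk), Phi_dbl_right _ (siteL_ne_siteR bk1)]
  rw [mixS_dbl_right _ (siteL_ne_siteR bk), mixS_dbl_right _ (siteL_ne_siteR bk1)]
  rw [sgl_apply_ne hLbk, hRbk, sgl_apply_self, hLbk1, sgl_apply_self, sgl_apply_ne hRbk1]
  rw [show phaseF 0 1 = 1 from rfl, show phaseF 2 1 = -Complex.I from rfl, one_mul, mul_one,
    negI_sub_star]
  rw [show mixF 0 1 = 1 from rfl, show mixF 2 1 = 3 from rfl]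
  rw [upd_upd_sgl hLbk, upd_sgl_self, upd_sgl_other (fun h => hRbk1 h.symm)]
  exact rfl

lemma H0_lie_X0 {N : ℕ} (hN : N ≥ 2) (a b : Fin (N - 1) → ℝ) :
    ⁅Pstr (sgl (⟨0, by omega⟩ : Fin N) 1), PH0 a b⁆
      = (b ⟨0, by omega⟩ : ℂ) •
          ((2*Complex.I) • Pstr (dbl (⟨0, by omega⟩ : Fin N) ⟨1, by omega⟩ 3 2)) := by
  set u : Fin N := ⟨0, by omega⟩ with hu
  set b0 : Fin (N-1) := ⟨0, by omega⟩ with hb0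
  rw [PH0, lie_sum']
  simp only [lie_add, lie_smul]
  rw [← Finset.sum_subset (Finset.subset_univ ({b0} : Finset (Fin (N-1))))
    (fun j _ hj => by
      simp only [Finset.mem_singleton, hb0, Fin.ext_iff] at hj
      rw [lie_sglX_XX, lie_sgl_far u 1 2 j
        (by simp only [siteL, hu, ne_eq, Fin.mk.injEq]; omega)
        (by simp only [siteR, hu, ne_eq, Fin.mk.injEq]; omega)]
      simp)]
  rw [Finset.sum_singleton]
  have hL : siteL b0 = u := by simp [siteL, hu, hb0, Fin.ext_iff]
  have hR : siteR b0 ≠ u := by simp [siteR, hu, hb0, Fin.ext_iff]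
  rw [lie_sglX_XX, smul_zero, zero_add]
  rw [lie_Pstr, Phi_dbl_right _ (siteL_ne_siteR b0), mixS_dbl_right _ (siteL_ne_siteR b0)]
  rw [hL, sgl_apply_self, sgl_apply_ne hR]
  rw [show phaseF 1 2 = Complex.I from rfl, show phaseF 0 2 = 1 from rfl, mul_one, I_sub_star]
  rw [show mixF 1 2 = 3 from rfl, show mixF 0 2 = 2 from rfl]
  rw [upd_sgl_self, upd_sgl_other (fun h => hR h.symm)]
  exact rfl

lemma H0_lie_Y0 {N : ℕ} (hN : N ≥ 2) (a b : Fin (N - 1) → ℝ) :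
    ⁅Pstr (sgl (⟨0, by omega⟩ : Fin N) 2), PH0 a b⁆
      = (a ⟨0, by omega⟩ : ℂ) •
          ((-(2*Complex.I)) • Pstr (dbl (⟨0, by omega⟩ : Fin N) ⟨1, by omega⟩ 3 1)) := by
  set u : Fin N := ⟨0, by omega⟩ with hu
  set b0 : Fin (N-1) := ⟨0, by omega⟩ with hb0
  rw [PH0, lie_sum']
  simp only [lie_add, lie_smul]
  rw [← Finset.sum_subset (Finset.subset_univ ({b0} : Finset (Fin (N-1))))
    (fun j _ hj => by
      simp only [Finset.mem_singleton, hb0, Fin.ext_iff] at hj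
      rw [lie_sglY_YY, lie_sgl_far u 2 1 j
        (by simp only [siteL, hu, ne_eq, Fin.mk.injEq]; omega)
        (by simp only [siteR, hu, ne_eq, Fin.mk.injEq]; omega)]
      simp)]
  rw [Finset.sum_singleton]
  have hL : siteL b0 = u := by simp [siteL, hu, hb0, Fin.ext_iff]
  have hR : siteR b0 ≠ u := by simp [siteR, hu, hb0, Fin.ext_iff]
  rw [lie_sglY_YY, smul_zero, add_zero]
  rw [lie_Pstr, Phi_dbl_right _ (siteL_ne_siteR b0), mixS_dbl_right _ (siteL_ne_siteR b0)]
  rw [hL, sgl_apply_self, sgl_apply_ne hR]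
  rw [show phaseF 2 1 = -Complex.I from rfl, show phaseF 0 1 = 1 from rfl, mul_one, negI_sub_star]
  rw [show mixF 2 1 = 3 from rfl, show mixF 0 1 = 1 from rfl]
  rw [upd_sgl_self, upd_sgl_other (fun h => hR h.symm)]
  exact rfl

section Extract
variable {N : ℕ} {S : LieSubalgebra ℝ (Matrix (Fin N → Fin 2) (Fin N → Fin 2) ℂ)}

lemma neg_one_smul_mem {Z : Matrix (Fin N → Fin 2) (Fin N → Fin 2) ℂ}
    (h : (-1 : ℂ) • Z ∈ S) : Z ∈ S := by
  have h2 := S.smul_mem (-1 : ℝ) h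
  rwa [real_smul_helper, show ((-1 : ℝ) : ℂ) * (-1) = 1 by norm_num, one_smul] at h2

lemma smul_I_mem_of {r : ℝ} (hr : r ≠ 0) {B : Matrix (Fin N → Fin 2) (Fin N → Fin 2) ℂ}
    (h : r • (Complex.I • B) ∈ S) : Complex.I • B ∈ S := by
  have h2 := S.smul_mem (1/r) h
  rwa [smul_smul, one_div, inv_mul_cancel₀ hr, one_smul] at h2

lemma conv1 (d : ℝ) (B : Matrix (Fin N → Fin 2) (Fin N → Fin 2) ℂ) :
    (d : ℂ) • ((2*Complex.I) • B) = (2*d : ℝ) • (Complex.I • B) := by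
  rw [smul_smul, real_smul_helper]
  congr 1; push_cast; ring

lemma conv2 (d : ℝ) (B : Matrix (Fin N → Fin 2) (Fin N → Fin 2) ℂ) :
    (d : ℂ) • ((-(2*Complex.I)) • B) = (-(2*d) : ℝ) • (Complex.I • B) := by
  rw [smul_smul, real_smul_helper]
  congr 1; push_cast; ring

lemma extract_two {c d : ℝ} (hd : d ≠ 0)
    {A B : Matrix (Fin N → Fin 2) (Fin N → Fin 2) ℂ}
    (h : (2*c : ℝ) • (Complex.I • A) + (2*d : ℝ) • (Complex.I • B) ∈ S)
    (hA : Complex.I • A ∈ S) : Complex.I • B ∈ S := by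
  have h2 := S.add_mem (S.smul_mem (-(2*c)) hA) h
  rw [← add_assoc, ← add_smul, show -(2*c) + 2*c = 0 by ring, zero_smul, zero_add] at h2
  exact smul_I_mem_of (by intro h'; exact hd (by linarith [h'])) h2

lemma extract_two' {c d : ℝ} (hd : d ≠ 0)
    {A B : Matrix (Fin N → Fin 2) (Fin N → Fin 2) ℂ}
    (h : (-(2*c) : ℝ) • (Complex.I • A) + (-(2*d) : ℝ) • (Complex.I • B) ∈ S)
    (hA : Complex.I • A ∈ S) : Complex.I • B ∈ S := by
  have h2 := S.add_mem (S.smul_mem ((2*c)) hA) h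
  rw [← add_assoc, ← add_smul, show 2*c + -(2*c) = 0 by ring, zero_smul, zero_add] at h2
  exact smul_I_mem_of (by intro h'; exact hd (by linarith [neg_eq_zero.mp h'])) h2

end Extract

section BondStep0
variable {N : ℕ} {S : LieSubalgebra ℝ (Matrix (Fin N → Fin 2) (Fin N → Fin 2) ℂ)}

/-- base version: uses the control X_v instead of a previous bond. -/
lemma bondStep0 {u v : Fin N} (huv : u ≠ v)
    (hu : ∀ p : Fin 4, p ≠ 0 → Complex.I • Pstr (sgl u p) ∈ S)
    (hXv : Complex.I • Pstr (sgl v 1) ∈ S)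
    (d31 : Complex.I • Pstr (dbl u v 3 1) ∈ S)
    (d32 : Complex.I • Pstr (dbl u v 3 2) ∈ S) :
    (∀ p : Fin 4, p ≠ 0 → Complex.I • Pstr (sgl v p) ∈ S) ∧
    (∀ p q : Fin 4, p ≠ 0 → q ≠ 0 → Complex.I • Pstr (dbl u v p q) ∈ S) := by
  have hZv : Complex.I • Pstr (sgl v 3) ∈ S := by
    have h := mem_bracket_dbl huv d31 d32 (by
      rw [dbl_apply_left, dbl_apply_right huv,
        show phaseF 3 3 = 1 from rfl, show phaseF 1 2 = Complex.I from rfl, one_mul]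
      left; rfl)
    rwa [dbl_apply_left, dbl_apply_right huv, upd_dbl huv,
      show mixF 3 3 = 0 from rfl, show mixF 1 2 = 3 from rfl, dbl_zero_left huv] at h
  have d33 : Complex.I • Pstr (dbl u v 3 3) ∈ S := by
    have h := mem_bracket_sgl d32 hXv (by
      rw [dbl_apply_right huv]; right; rfl)
    rwa [dbl_apply_right huv, show mixF 2 1 = 3 from rfl, upd_dbl_right huv] at h
  have hYv : Complex.I • Pstr (sgl v 2) ∈ S := by
    have h := mem_bracket_dbl huv d31 d33 (by
      rw [dbl_apply_left, dbl_apply_right huv,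
        show phaseF 3 3 = 1 from rfl, show phaseF 1 3 = -Complex.I from rfl, one_mul]
      right; rfl)
    rwa [dbl_apply_left, dbl_apply_right huv, upd_dbl huv,
      show mixF 3 3 = 0 from rfl, show mixF 1 3 = 2 from rfl, dbl_zero_left huv] at h
  have d21 : Complex.I • Pstr (dbl u v 2 1) ∈ S := by
    have h := mem_bracket_sgl d31 (hu 1 (by decide)) (by
      rw [dbl_apply_left]; left; rfl)
    rwa [dbl_apply_left, show mixF 3 1 = 2 from rfl, upd_dbl_left huv] at h
  have d11 : Complex.I • Pstr (dbl u v 1 1) ∈ S := by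
    have h := mem_bracket_sgl d31 (hu 2 (by decide)) (by
      rw [dbl_apply_left]; right; rfl)
    rwa [dbl_apply_left, show mixF 3 2 = 1 from rfl, upd_dbl_left huv] at h
  have d22 : Complex.I • Pstr (dbl u v 2 2) ∈ S := by
    have h := mem_bracket_sgl d32 (hu 1 (by decide)) (by
      rw [dbl_apply_left]; left; rfl)
    rwa [dbl_apply_left, show mixF 3 1 = 2 from rfl, upd_dbl_left huv] at h
  have d12 : Complex.I • Pstr (dbl u v 1 2) ∈ S := by
    have h := mem_bracket_sgl d32 (hu 2 (by decide)) (by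
      rw [dbl_apply_left]; right; rfl)
    rwa [dbl_apply_left, show mixF 3 2 = 1 from rfl, upd_dbl_left huv] at h
  have d13 : Complex.I • Pstr (dbl u v 1 3) ∈ S := by
    have h := mem_bracket_sgl d11 hYv (by
      rw [dbl_apply_right huv]; left; rfl)
    rwa [dbl_apply_right huv, show mixF 1 2 = 3 from rfl, upd_dbl_right huv] at h
  have d23 : Complex.I • Pstr (dbl u v 2 3) ∈ S := by
    have h := mem_bracket_sgl d21 hYv (by
      rw [dbl_apply_right huv]; left; rfl)
    rwa [dbl_apply_right huv, show mixF 1 2 = 3 from rfl, upd_dbl_right huv] at h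
  refine ⟨?_, ?_⟩
  · intro p hp
    fin_cases p
    · exact absurd rfl hp
    · exact hXv
    · exact hYv
    · exact hZv
  · intro p q hp hq
    fin_cases p <;> fin_cases q
    any_goals exact absurd rfl hp
    any_goals exact absurd rfl hq
    exacts [d11, d12, d13, d21, d22, d23, d31, d32, d33]

end BondStep0

section Chain
variable {N : ℕ} {S : LieSubalgebra ℝ (Matrix (Fin N → Fin 2) (Fin N → Fin 2) ℂ)}

lemma chain (hN : N ≥ 2) (a b : Fin (N - 1) → ℝ)
    (ha : ∀ j, a j ≠ 0) (hb : ∀ j, b j ≠ 0)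
    (hH0 : Complex.I • PH0 a b ∈ S)
    (hZ0 : Complex.I • Pstr (sgl (⟨0, by omega⟩ : Fin N) 3) ∈ S)
    (hX0 : Complex.I • Pstr (sgl (⟨0, by omega⟩ : Fin N) 1) ∈ S)
    (hX1 : Complex.I • Pstr (sgl (⟨1, by omega⟩ : Fin N) 1) ∈ S) :
    ∀ k : ℕ, ∀ hk : k < N - 1,
      (∀ p : Fin 4, p ≠ 0 → Complex.I • Pstr (sgl (⟨k, by omega⟩ : Fin N) p) ∈ S) ∧
      (∀ p : Fin 4, p ≠ 0 → Complex.I • Pstr (sgl (⟨k+1, by omega⟩ : Fin N) p) ∈ S) ∧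
      (∀ p q : Fin 4, p ≠ 0 → q ≠ 0 →
        Complex.I • Pstr (dbl (⟨k, by omega⟩ : Fin N) (⟨k+1, by omega⟩ : Fin N) p q) ∈ S) := by
  intro k
  induction k with
  | zero =>
    intro hk
    set u : Fin N := ⟨0, by omega⟩ with hu
    set v : Fin N := ⟨1, by omega⟩ with hv
    have huv : u ≠ v := by simp [hu, hv, Fin.ext_iff]
    -- Y_0 from Z_0, X_0
    have hY0 : Complex.I • Pstr (sgl u 2) ∈ S := by
      have h := mem_bracket_sgl hZ0 hX0 (by rw [sgl_apply_self]; left; rfl)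
      rwa [sgl_apply_self, show mixF 3 1 = 2 from rfl, upd_sgl_self] at h
    have hsu : ∀ p : Fin 4, p ≠ 0 → Complex.I • Pstr (sgl u p) ∈ S := by
      intro p hp
      fin_cases p
      · exact absurd rfl hp
      · exact hX0
      · exact hY0
      · exact hZ0
    -- seed Z_0 Y_1 from [X_0, H_0]
    have d32 : Complex.I • Pstr (dbl u v 3 2) ∈ S := by
      have h := S.lie_mem hX0 hH0
      rw [lie_smul, smul_lie, smul_smul, Complex.I_mul_I, H0_lie_X0 hN a b] at h
      replace h := neg_one_smul_mem h
      rw [conv1] at h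
      exact smul_I_mem_of (by have := hb ⟨0, by omega⟩; intro h'; exact this (by linarith)) h
    -- seed Z_0 X_1 from [Y_0, H_0]
    have d31 : Complex.I • Pstr (dbl u v 3 1) ∈ S := by
      have h := S.lie_mem hY0 hH0
      rw [lie_smul, smul_lie, smul_smul, Complex.I_mul_I, H0_lie_Y0 hN a b] at h
      replace h := neg_one_smul_mem h
      rw [conv2] at h
      exact smul_I_mem_of (by have := ha ⟨0, by omega⟩; intro h'; exact this (by
        have := neg_eq_zero.mp h'; linarith)) h
    obtain ⟨hv1, hv2⟩ := bondStep0 huv hsu hX1 d31 d32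
    exact ⟨hsu, hv1, hv2⟩
  | succ k ih =>
    intro hk
    have hk' : k < N - 1 := by omega
    obtain ⟨hw, hu, hwud⟩ := ih hk'
    set w : Fin N := ⟨k, by omega⟩ with hwdef
    set u : Fin N := ⟨k+1, by omega⟩ with hudef
    set v : Fin N := ⟨k+2, by omega⟩ with hvdef
    have hwu : w ≠ u := by simp [hwdef, hudef, Fin.ext_iff]
    have huv : u ≠ v := by simp [hudef, hvdef, Fin.ext_iff]
    have hwv : w ≠ v := by simp [hwdef, hvdef, Fin.ext_iff]
    -- seed Z_u Y_v from [X_u, H_0]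
    have d32 : Complex.I • Pstr (dbl u v 3 2) ∈ S := by
      have h := S.lie_mem (hu 1 (by decide)) hH0
      rw [lie_smul, smul_lie, smul_smul, Complex.I_mul_I, H0_lie_X a b k hk] at h
      replace h := neg_one_smul_mem h
      rw [conv1, conv1] at h
      exact extract_two (hb ⟨k+1, by omega⟩) h (hwud 2 3 (by decide) (by decide))
    -- seed Z_u X_v from [Y_u, H_0]
    have d31 : Complex.I • Pstr (dbl u v 3 1) ∈ S := by
      have h := S.lie_mem (hu 2 (by decide)) hH0
      rw [lie_smul, smul_lie, smul_smul, Complex.I_mul_I, H0_lie_Y a b k hk] at h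
      replace h := neg_one_smul_mem h
      rw [conv2, conv2] at h
      exact extract_two' (ha ⟨k+1, by omega⟩) h (hwud 1 3 (by decide) (by decide))
    obtain ⟨hv1, hv2⟩ := bondStep hwu huv hwv hu hwud d31 d32
    exact ⟨hu, hv1, hv2⟩

end Chain

def partner : Fin 4 → Fin 4 × Fin 4
  | 1 => (2, 3)
  | 2 => (3, 1)
  | 3 => (1, 2)
  | _ => (0, 0)

lemma partner_fst_ne : ∀ p : Fin 4, p ≠ 0 → (partner p).1 ≠ 0 := by decide
lemma partner_snd_ne : ∀ p : Fin 4, p ≠ 0 → (partner p).2 ≠ 0 := by decide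
lemma partner_mix : ∀ p : Fin 4, p ≠ 0 → mixF (partner p).1 (partner p).2 = p := by decide
lemma partner_phase : ∀ p : Fin 4, p ≠ 0 → phaseF (partner p).1 (partner p).2 = Complex.I := by
  intro p hp
  fin_cases p
  · exact absurd rfl hp
  · rfl
  · rfl
  · rfl

section AllStrings
variable {N : ℕ} {S : LieSubalgebra ℝ (Matrix (Fin N → Fin 2) (Fin N → Fin 2) ℂ)}

lemma all_strings (hN : 2 ≤ N)
    (hsgl : ∀ (u : Fin N) (p : Fin 4), p ≠ 0 → Complex.I • Pstr (sgl u p) ∈ S)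
    (hdbl : ∀ (k : ℕ) (hk : k + 1 < N) (p q : Fin 4), p ≠ 0 → q ≠ 0 →
      Complex.I • Pstr (dbl (⟨k, by omega⟩ : Fin N) (⟨k+1, by omega⟩ : Fin N) p q) ∈ S) :
    ∀ s : Fin N → Fin 4, s ≠ (fun _ => 0) → Complex.I • Pstr s ∈ S := by
  have main : ∀ q : ℕ, q < N → ∀ s : Fin N → Fin 4,
      (∀ j : Fin N, q < (j : ℕ) → s j = 0) → s ≠ (fun _ => 0) →
      Complex.I • Pstr s ∈ S := by
    intro q
    induction q with
    | zero =>
      intro hq s hsupp hs0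
      have hu : s = sgl (⟨0, by omega⟩ : Fin N) (s ⟨0, by omega⟩) := by
        funext m
        rcases eq_or_ne m ⟨0, by omega⟩ with rfl | hm
        · rw [sgl_apply_self]
        · rw [sgl_apply_ne hm, hsupp m (by simp [Fin.ext_iff] at hm; omega)]
      have hne : s ⟨0, by omega⟩ ≠ 0 := by
        intro h0
        apply hs0
        funext m
        rcases eq_or_ne m ⟨0, by omega⟩ with rfl | hm
        · exact h0
        · exact hsupp m (by simp [Fin.ext_iff] at hm; omega)
      rw [hu]; exact hsgl _ _ hne
    | succ q ih =>
      intro hq s hsupp hs0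
      set uq : Fin N := ⟨q, by omega⟩ with huq
      set uq1 : Fin N := ⟨q+1, by omega⟩ with huq1
      have hne : uq ≠ uq1 := by simp [huq, huq1, Fin.ext_iff]
      rcases eq_or_ne (s uq1) 0 with h1 | h1
      · exact ih (by omega) s (fun j hj => by
          rcases eq_or_ne j uq1 with rfl | hj2
          · exact h1
          · exact hsupp j (by simp [Fin.ext_iff, huq1] at hj2 ⊢; omega)) hs0
      -- the case with s nontrivial at both uq and uq1
      · have caseA : ∀ s' : Fin N → Fin 4, (∀ j : Fin N, q + 1 < (j : ℕ) → s' j = 0) →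
            s' uq ≠ 0 → s' uq1 ≠ 0 → Complex.I • Pstr s' ∈ S := by
          intro s' hsupp' h3 h4
          set P1 := (partner (s' uq)).1 with hP1
          set P2 := (partner (s' uq)).2 with hP2
          set X := Function.update (Function.update s' uq P1) uq1 0 with hX
          have hXuq : X uq = P1 := by
            rw [hX]; rw [Function.update_apply, if_neg hne, Function.update_self]
          have hXuq1 : X uq1 = 0 := by rw [hX, Function.update_self]
          have hXmem : Complex.I • Pstr X ∈ S := by
            apply ih (by omega) X
            · intro j hj
              rcases eq_or_ne j uq1 with rfl | hj2
              · exact hXuq1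
              · have hj2' : (j : ℕ) ≠ q + 1 := by simpa [huq1, Fin.ext_iff] using hj2
                rw [hX, Function.update_apply, if_neg hj2, Function.update_apply,
                  if_neg (by simp [huq, Fin.ext_iff]; omega), hsupp' j (by omega)]
            · intro h0
              have := congrFun h0 uq
              rw [hXuq] at this
              exact partner_fst_ne _ h3 this
          have hv := hdbl q (by omega) P2 (s' uq1) (partner_snd_ne _ h3) h4
          have h := mem_bracket_dbl hne hXmem hv (by
            rw [hXuq, hXuq1, hP1, hP2, partner_phase _ h3, zero_phase, mul_one]
            left; rfl)
          rw [hXuq, hXuq1, hP1, hP2, partner_mix _ h3, zero_mix] at h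
          have hfin : Function.update (Function.update X uq (s' uq)) uq1 (s' uq1) = s' := by
            funext m
            rcases eq_or_ne m uq1 with rfl | hm1
            · simp [Function.update]
            · rcases eq_or_ne m uq with rfl | hm2
              · simp [Function.update, hne, hm1]
              · simp only [Function.update, hX]
                simp [hm1, hm2]
          rwa [hfin] at h
        rcases eq_or_ne (s uq) 0 with h3 | h3
        · set Q1 := (partner (s uq1)).1 with hQ1
          set Q2 := (partner (s uq1)).2 with hQ2
          set X2 := Function.update (Function.update s uq 3) uq1 Q1 with hX2
          have hX2uq : X2 uq = 3 := by
            rw [hX2, Function.update_apply, if_neg hne, Function.update_self]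
          have hX2uq1 : X2 uq1 = Q1 := by rw [hX2, Function.update_self]
          have hX2mem : Complex.I • Pstr X2 ∈ S := by
            apply caseA X2
            · intro j hj
              rw [hX2, Function.update_apply, if_neg (by simp [huq1, Fin.ext_iff]; omega),
                Function.update_apply, if_neg (by simp [huq, Fin.ext_iff]; omega),
                hsupp j (by omega)]
            · rw [hX2uq]; decide
            · rw [hX2uq1, hQ1]; exact partner_fst_ne _ h1
          have hv := hdbl q (by omega) 3 Q2 (by decide) (by rw [hQ2]; exact partner_snd_ne _ h1)
          have h := mem_bracket_dbl hne hX2mem hv (by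
            rw [hX2uq, hX2uq1, hQ1, hQ2, partner_phase _ h1,
              show phaseF 3 3 = 1 from rfl, one_mul]
            left; rfl)
          rw [hX2uq, hX2uq1, hQ1, hQ2, partner_mix _ h1, show mixF 3 3 = 0 from rfl] at h
          have hfin : Function.update (Function.update X2 uq 0) uq1 (s uq1) = s := by
            funext m
            rcases eq_or_ne m uq1 with rfl | hm1
            · simp [Function.update]
            · rcases eq_or_ne m uq with rfl | hm2
              · simp [Function.update, hne, hm1, h3.symm]
              · simp only [Function.update, hX2]
                simp [hm1, hm2]
          rwa [hfin] at h
        · exact caseA s hsupp h3 h1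
  intro s hs0
  exact main (N - 1) (by omega) s (fun j hj => absurd j.isLt (by omega)) hs0

end AllStrings

lemma sig_complete : ∀ a b c d : Fin 2,
    ∑ p : Fin 4, sig p a b * sig p c d = if a = d ∧ b = c then 2 else 0 := by
  intro a b c d
  fin_cases a <;> fin_cases b <;> fin_cases c <;> fin_cases d <;>
    · rw [Fin.sum_univ_four]
      norm_num [sig, PauliX, PauliY, PauliZ, one22, Complex.ext_iff]

lemma Pstr_zero_eq_one {N : ℕ} : Pstr (fun _ => (0 : Fin 4)) = (1 : Matrix (Fin N → Fin 2) (Fin N → Fin 2) ℂ) := by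
  ext x y
  simp only [Pstr, kronN, Matrix.of_apply, Matrix.one_apply]
  rcases eq_or_ne x y with rfl | hxy
  · rw [if_pos rfl]
    exact Finset.prod_eq_one (fun j _ => by simp [sig, Matrix.one_apply])
  · rw [if_neg hxy]
    obtain ⟨j, hj⟩ := Function.ne_iff.mp hxy
    exact Finset.prod_eq_zero (Finset.mem_univ j) (by simp [sig, Matrix.one_apply, hj])

lemma Pstr_herm {N : ℕ} (s : Fin N → Fin 4) : (Pstr s)ᴴ = Pstr s := by
  rw [Pstr, kronN_conjTranspose]
  exact congrArg _ (funext fun j => sig_herm (s j))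

lemma key_sum {N : ℕ} (x y z w : Fin N → Fin 2) :
    ∑ s : Fin N → Fin 4, Pstr s z w * Pstr s x y
      = if z = y ∧ w = x then (2^N : ℂ) else 0 := by
  have h1 : ∀ s : Fin N → Fin 4, Pstr s z w * Pstr s x y
      = ∏ j, (sig (s j) (z j) (w j) * sig (s j) (x j) (y j)) := by
    intro s
    simp only [Pstr, kronN, Matrix.of_apply]
    rw [Finset.prod_mul_distrib]
  simp only [h1]
  rw [← Fintype.piFinset_univ,
    ← Finset.prod_univ_sum (fun _ => (Finset.univ : Finset (Fin 4)))
      (fun j p => sig p (z j) (w j) * sig p (x j) (y j))]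
  have h2 : ∀ j : Fin N, ∑ p : Fin 4, sig p (z j) (w j) * sig p (x j) (y j)
      = if z j = y j ∧ w j = x j then 2 else 0 := fun j => sig_complete _ _ _ _
  simp only [h2]
  by_cases h : z = y ∧ w = x
  · rw [if_pos h]
    have : ∀ j : Fin N, (if z j = y j ∧ w j = x j then (2:ℂ) else 0) = 2 := by
      intro j; rw [if_pos ⟨congrFun h.1 j, congrFun h.2 j⟩]
    rw [Finset.prod_congr rfl (fun j _ => this j), Finset.prod_const, Finset.card_univ,
      Fintype.card_fin]
  · rw [if_neg h]
    have : ∃ j : Fin N, ¬(z j = y j ∧ w j = x j) := by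
      by_contra hc
      push_neg at hc
      exact h ⟨funext fun j => (hc j).1, funext fun j => (hc j).2⟩
    obtain ⟨j, hj⟩ := this
    exact Finset.prod_eq_zero (Finset.mem_univ j) (by rw [if_neg hj])

lemma Pstr_expand {N : ℕ} (M : Matrix (Fin N → Fin 2) (Fin N → Fin 2) ℂ) :
    M = ∑ s : Fin N → Fin 4, ((Pstr s * M).trace / (2^N : ℂ)) • Pstr s := by
  ext x y
  rw [Matrix.sum_apply]
  simp only [Matrix.smul_apply, smul_eq_mul]
  have htr : ∀ s : Fin N → Fin 4, (Pstr s * M).trace = ∑ z, ∑ w, Pstr s z w * M w z := by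
    intro s
    simp [Matrix.trace, Matrix.diag, Matrix.mul_apply]
  simp only [htr]
  have step : ∀ s : Fin N → Fin 4,
      (∑ z, ∑ w, Pstr s z w * M w z) / (2^N : ℂ) * Pstr s x y
        = ∑ z, ∑ w, (M w z / (2^N : ℂ)) * (Pstr s z w * Pstr s x y) := by
    intro s
    rw [Finset.sum_div, Finset.sum_mul]
    refine Finset.sum_congr rfl fun z _ => ?_
    rw [Finset.sum_div, Finset.sum_mul]
    refine Finset.sum_congr rfl fun w _ => ?_
    field_simp
  simp only [step]
  rw [Finset.sum_comm]
  have inner : ∀ z, ∑ s : Fin N → Fin 4, ∑ w, (M w z / (2^N : ℂ)) * (Pstr s z w * Pstr s x y)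
      = ∑ w, (M w z / (2^N : ℂ)) * (if z = y ∧ w = x then (2^N : ℂ) else 0) := by
    intro z
    rw [Finset.sum_comm]
    refine Finset.sum_congr rfl fun w _ => ?_
    rw [← Finset.mul_sum, key_sum]
  simp only [inner, mul_ite, mul_zero]
  have last : ∀ z, (∑ w, if z = y ∧ w = x then M w z / (2^N:ℂ) * (2^N:ℂ) else 0)
      = if z = y then M x z / (2^N:ℂ) * (2^N:ℂ) else 0 := by
    intro z
    by_cases hz : z = y
    · simp only [hz, true_and]
      exact Finset.sum_ite_eq' Finset.univ x (fun w => M w y / (2^N:ℂ) * (2^N:ℂ)) |>.trans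
        (by simp)
    · simp [hz]
  rw [Finset.sum_congr rfl (fun z _ => last z),
    Finset.sum_ite_eq' Finset.univ y (fun z => M x z / (2^N:ℂ) * (2^N:ℂ))]
  simp only [Finset.mem_univ, if_true]
  rw [div_mul_cancel₀]
  exact pow_ne_zero _ two_ne_zero

lemma span_su {N : ℕ} {S : LieSubalgebra ℝ (Matrix (Fin N → Fin 2) (Fin N → Fin 2) ℂ)}
    (hstr : ∀ s : Fin N → Fin 4, s ≠ (fun _ => 0) → Complex.I • Pstr s ∈ S)
    (M : Matrix (Fin N → Fin 2) (Fin N → Fin 2) ℂ)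
    (hherm : Mᴴ = -M) (htr : M.trace = 0) : M ∈ S := by
  rw [Pstr_expand M]
  apply sum_mem
  intro s _
  rcases eq_or_ne s (fun _ => 0) with rfl | hs
  · rw [Pstr_zero_eq_one, one_mul, htr, zero_div, zero_smul]
    exact S.zero_mem
  · set c : ℂ := (Pstr s * M).trace / (2^N : ℂ) with hc
    have hstar : star ((Pstr s * M).trace) = -((Pstr s * M).trace) := by
      have h1 : star ((Pstr s * M).trace) = ((Pstr s * M)ᴴ).trace := by
        rw [Matrix.trace_conjTranspose]
      rw [h1, Matrix.conjTranspose_mul, Pstr_herm, hherm, Matrix.neg_mul,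
        Matrix.trace_neg, Matrix.trace_mul_comm]
    have hcstar : star c = -c := by
      rw [hc, star_div₀, hstar, star_pow, neg_div]
      congr 2
      simp
    have hre : c.re = 0 := by
      have := congrArg Complex.re hcstar
      simp only [Complex.star_def, Complex.conj_re, Complex.neg_re] at this
      linarith
    have hcI : c = (c.im : ℂ) * Complex.I := by
      apply Complex.ext <;> simp [hre]
    rw [hcI, ← real_smul_helper]
    exact S.smul_mem _ (hstr s hs)

noncomputable def suLie (N : ℕ) : LieSubalgebra ℝ (Matrix (Fin N → Fin 2) (Fin N → Fin 2) ℂ) where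
  carrier := {M | Mᴴ = -M ∧ M.trace = 0}
  add_mem' := fun ha hb => ⟨by rw [Matrix.conjTranspose_add, ha.1, hb.1, neg_add],
    by rw [Matrix.trace_add, ha.2, hb.2, add_zero]⟩
  zero_mem' := ⟨by simp, by simp⟩
  smul_mem' := fun r M hM => ⟨by
      rw [Matrix.conjTranspose_smul, hM.1, star_trivial, smul_neg], by
      rw [Matrix.trace_smul, hM.2, smul_zero]⟩
  lie_mem' := fun {x y} hx hy => by
    constructor
    · show ⁅x, y⁆ᴴ = -⁅x, y⁆
      rw [Ring.lie_def, Matrix.conjTranspose_sub, Matrix.conjTranspose_mul,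
        Matrix.conjTranspose_mul, hx.1, hy.1, Matrix.neg_mul, Matrix.mul_neg,
        Matrix.neg_mul, Matrix.mul_neg, neg_neg, neg_neg, neg_sub]
    · show (⁅x, y⁆ : Matrix (Fin N → Fin 2) (Fin N → Fin 2) ℂ).trace = 0
      rw [Ring.lie_def, Matrix.trace_sub, Matrix.trace_mul_comm, sub_self]

lemma localOp_eq_Pstr {N : ℕ} (k : Fin N) (p : Fin 4) :
    localOp k (sig p) = Pstr (sgl k p) := by
  unfold localOp Pstr
  refine congrArg kronN (funext fun m => ?_)
  by_cases h : m = k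
  · simp [h, sgl]
  · simp [h, sgl]; rfl

lemma twoOp_eq_Pstr {N : ℕ} (j k : Fin N) (p q : Fin 4) :
    twoOp j k (sig p) (sig q) = Pstr (dbl j k p q) := by
  unfold twoOp Pstr
  refine congrArg kronN (funext fun m => ?_)
  by_cases h1 : m = j
  · simp [h1, dbl]
  · by_cases h2 : m = k
    · simp [h1, h2, dbl]
      split <;> rfl
    · simp [h1, h2, dbl]; rfl

lemma sgl_ne_zero {N : ℕ} {k : Fin N} {p : Fin 4} (hp : p ≠ 0) :
    sgl k p ≠ (fun _ => 0) := by
  intro h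
  have := congrFun h k
  rw [sgl_apply_self] at this
  exact hp this

lemma dbl_ne_zero {N : ℕ} {j k : Fin N} {p q : Fin 4} (hp : p ≠ 0) :
    dbl j k p q ≠ (fun _ => 0) := by
  intro h
  have := congrFun h j
  rw [dbl_apply_left] at this
  exact hp this

lemma Pstr_trace_zero {N : ℕ} {s : Fin N → Fin 4} (hs : s ≠ fun _ => 0) :
    (Pstr s).trace = 0 := by
  rw [Pstr, kronN_trace]
  obtain ⟨j, hj⟩ := Function.ne_iff.mp hs
  exact Finset.prod_eq_zero (Finset.mem_univ j) (by rw [sig_trace, if_neg hj])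

lemma Ipstr_mem_su {N : ℕ} {s : Fin N → Fin 4} (hs : s ≠ fun _ => 0) :
    Complex.I • Pstr s ∈ suLie N := by
  constructor
  · show (Complex.I • Pstr s)ᴴ = -(Complex.I • Pstr s)
    rw [Matrix.conjTranspose_smul, Pstr_herm, Complex.star_def, Complex.conj_I, neg_smul]
  · show (Complex.I • Pstr s).trace = 0
    rw [Matrix.trace_smul, Pstr_trace_zero hs, smul_zero]

lemma smul_swap_real {N : ℕ} (r : ℝ) (X : Matrix (Fin N → Fin 2) (Fin N → Fin 2) ℂ) :
    Complex.I • ((r : ℂ) • X) = r • (Complex.I • X) := by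
  rw [smul_smul, real_smul_helper, mul_comm]

lemma IH0_mem_su {N : ℕ} (a b : Fin (N - 1) → ℝ) :
    Complex.I • PH0 a b ∈ suLie N := by
  rw [PH0, Finset.smul_sum]
  apply sum_mem
  intro j _
  rw [smul_add, smul_swap_real, smul_swap_real]
  exact add_mem
    ((suLie N).smul_mem _ (Ipstr_mem_su (dbl_ne_zero (by decide))))
    ((suLie N).smul_mem _ (Ipstr_mem_su (dbl_ne_zero (by decide))))

/-- An XY chain (including the XX case) of length `N` with three local controls `Z_1`, `X_1`,
`X_2` on the first two spins is fully controllable: the dynamical Lie algebra is `su(2^N)`,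
the traceless skew-Hermitian matrices. -/
theorem xy_three_controls_full (N : ℕ) (hN : 2 ≤ N) (a b : Fin (N - 1) → ℝ)
    (ha : ∀ j, a j ≠ 0) (hb : ∀ j, b j ≠ 0) :
    let H₀ : Matrix (Fin N → Fin 2) (Fin N → Fin 2) ℂ :=
      ∑ j : Fin (N - 1),
        ((a j : ℂ) • twoOp (siteL j) (siteR j) PauliX PauliX +
         (b j : ℂ) • twoOp (siteL j) (siteR j) PauliY PauliY)
    let H₁ : Matrix (Fin N → Fin 2) (Fin N → Fin 2) ℂ := localOp ⟨0, by omega⟩ PauliZ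
    let H₂ : Matrix (Fin N → Fin 2) (Fin N → Fin 2) ℂ := localOp ⟨0, by omega⟩ PauliX
    let H₃ : Matrix (Fin N → Fin 2) (Fin N → Fin 2) ℂ := localOp ⟨1, by omega⟩ PauliX
    ((LieSubalgebra.lieSpan ℝ (Matrix (Fin N → Fin 2) (Fin N → Fin 2) ℂ)
        {Complex.I • H₀, Complex.I • H₁, Complex.I • H₂, Complex.I • H₃}) :
      Set (Matrix (Fin N → Fin 2) (Fin N → Fin 2) ℂ)) =
      {M | Mᴴ = -M ∧ M.trace = 0} := by
  intro H₀ H₁ H₂ H₃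
  have hH0eq : H₀ = PH0 a b := Finset.sum_congr rfl fun j _ => by
    rw [show PauliX = sig 1 from rfl, show PauliY = sig 2 from rfl,
      twoOp_eq_Pstr, twoOp_eq_Pstr]
  have hH1eq : H₁ = Pstr (sgl (⟨0, by omega⟩ : Fin N) 3) := by
    rw [show H₁ = localOp (⟨0, by omega⟩ : Fin N) PauliZ from rfl,
      show PauliZ = sig 3 from rfl, localOp_eq_Pstr]
  have hH2eq : H₂ = Pstr (sgl (⟨0, by omega⟩ : Fin N) 1) := by
    rw [show H₂ = localOp (⟨0, by omega⟩ : Fin N) PauliX from rfl,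
      show PauliX = sig 1 from rfl, localOp_eq_Pstr]
  have hH3eq : H₃ = Pstr (sgl (⟨1, by omega⟩ : Fin N) 1) := by
    rw [show H₃ = localOp (⟨1, by omega⟩ : Fin N) PauliX from rfl,
      show PauliX = sig 1 from rfl, localOp_eq_Pstr]
  set S := LieSubalgebra.lieSpan ℝ (Matrix (Fin N → Fin 2) (Fin N → Fin 2) ℂ)
      {Complex.I • H₀, Complex.I • H₁, Complex.I • H₂, Complex.I • H₃} with hS
  have g0 : Complex.I • H₀ ∈ S := LieSubalgebra.subset_lieSpan (Set.mem_insert _ _)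
  have g1 : Complex.I • H₁ ∈ S :=
    LieSubalgebra.subset_lieSpan (Set.mem_insert_of_mem _ (Set.mem_insert _ _))
  have g2 : Complex.I • H₂ ∈ S :=
    LieSubalgebra.subset_lieSpan
      (Set.mem_insert_of_mem _ (Set.mem_insert_of_mem _ (Set.mem_insert _ _)))
  have g3 : Complex.I • H₃ ∈ S :=
    LieSubalgebra.subset_lieSpan
      (Set.mem_insert_of_mem _ (Set.mem_insert_of_mem _ (Set.mem_insert_of_mem _ rfl)))
  have hH0 : Complex.I • PH0 a b ∈ S := by rwa [hH0eq] at g0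
  have hZ0 : Complex.I • Pstr (sgl (⟨0, by omega⟩ : Fin N) 3) ∈ S := by rwa [hH1eq] at g1
  have hX0 : Complex.I • Pstr (sgl (⟨0, by omega⟩ : Fin N) 1) ∈ S := by rwa [hH2eq] at g2
  have hX1 : Complex.I • Pstr (sgl (⟨1, by omega⟩ : Fin N) 1) ∈ S := by rwa [hH3eq] at g3
  have hbonds := chain hN a b ha hb hH0 hZ0 hX0 hX1
  have hsgl : ∀ (u : Fin N) (p : Fin 4), p ≠ 0 → Complex.I • Pstr (sgl u p) ∈ S := by
    intro u p hp
    by_cases h : (u : ℕ) < N - 1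
    · exact (hbonds u h).1 p hp
    · have hu : (u : ℕ) = N - 1 := by have := u.isLt; omega
      have h2 := (hbonds (N-2) (by omega)).2.1 p hp
      have he : (⟨N-2+1, by omega⟩ : Fin N) = u := by
        apply Fin.ext; simp; omega
      rwa [he] at h2
  have hdbl : ∀ (k : ℕ) (hk : k + 1 < N) (p q : Fin 4), p ≠ 0 → q ≠ 0 →
      Complex.I • Pstr (dbl (⟨k, by omega⟩ : Fin N) (⟨k+1, by omega⟩ : Fin N) p q) ∈ S :=
    fun k hk p q hp hq => (hbonds k (by omega)).2.2 p q hp hq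
  have hstr := all_strings hN hsgl hdbl
  ext M
  constructor
  · intro hM
    have hle : S ≤ suLie N := by
      rw [hS, LieSubalgebra.lieSpan_le]
      intro X hX
      simp only [Set.mem_insert_iff, Set.mem_singleton_iff] at hX
      rcases hX with rfl | rfl | rfl | rfl
      · rw [hH0eq]; exact IH0_mem_su a b
      · rw [hH1eq]; exact Ipstr_mem_su (sgl_ne_zero (by decide))
      · rw [hH2eq]; exact Ipstr_mem_su (sgl_ne_zero (by decide))
      · rw [hH3eq]; exact Ipstr_mem_su (sgl_ne_zero (by decide))
    exact hle hM
  · intro hM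
    exact span_su hstr M hM.1 hM.2
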